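/- Suppose t, ν solve d(ν²)/dr = 6t, dt/dr = 1 - 2t²/ν² with t(0) = 0, ν(0) = ν₀ > 0. Then along the solution, t² = (ν^{10/3} - ν₀^{10/3})/(5ν^{4/3}). -/

import Mathlib

open Set

open Filter Topology

theorem spin7_t_in_terms_of_nu (t ν : ℝ → ℝ) (ν₀ : ℝ) (hν₀ : 0 < ν₀)
    (ht0 : t 0 = 0) (hν0 : ν 0 = ν₀)
    (htc : ContinuousOn t (Ici 0)) (hνc : ContinuousOn ν (Ici 0))
    (hpos : ∀ r > 0, 0 < t r ∧ 0 < ν r)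
    (h1 : ∀ r > 0, HasDerivAt (fun s => ν s ^ 2) (6 * t r) r)
    (h2 : ∀ r > 0, HasDerivAt t (1 - 2 * t r ^ 2 / ν r ^ 2) r) :
    ∀ r ≥ 0, t r ^ 2 = (ν r ^ ((10 : ℝ) / 3) - ν₀ ^ ((10 : ℝ) / 3)) / (5 * ν r ^ ((4 : ℝ) / 3)) := by
  set G : ℝ → ℝ := fun s => 5 * t s ^ 2 * (ν s ^ 2) ^ ((2:ℝ)/3) - (ν s ^ 2) ^ ((5:ℝ)/3)
    with hGdef
  have hGc : ContinuousOn G (Ici 0) := by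
    apply ContinuousOn.sub
    · exact (continuousOn_const.mul (htc.pow 2)).mul
        ((hνc.pow 2).rpow_const (fun x _ => Or.inr (by norm_num)))
    · exact (hνc.pow 2).rpow_const (fun x _ => Or.inr (by norm_num))
  have hGd : ∀ x > 0, HasDerivAt G 0 x := by
    intro x hx
    have hν := (hpos x hx).2
    have hu : (0:ℝ) < ν x ^ 2 := by positivity
    have hd2 : HasDerivAt (fun s => (ν s ^ 2) ^ ((2:ℝ)/3))
        (((2:ℝ)/3) * (ν x ^ 2) ^ ((2:ℝ)/3 - 1) * (6 * t x)) x := by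
      simpa [Function.comp_def] using
        (Real.hasDerivAt_rpow_const (p := (2:ℝ)/3) (Or.inl hu.ne')).comp x (h1 x hx)
    have hd5 : HasDerivAt (fun s => (ν s ^ 2) ^ ((5:ℝ)/3))
        (((5:ℝ)/3) * (ν x ^ 2) ^ ((5:ℝ)/3 - 1) * (6 * t x)) x := by
      simpa [Function.comp_def] using
        (Real.hasDerivAt_rpow_const (p := (5:ℝ)/3) (Or.inl hu.ne')).comp x (h1 x hx)
    have hdt : HasDerivAt (fun s => t s ^ 2) (2 * t x * (1 - 2 * t x ^ 2 / ν x ^ 2)) x := by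
      simpa [mul_comm] using (h2 x hx).fun_pow 2
    have hfinal := ((hdt.const_mul 5).mul hd2).sub hd5
    refine HasDerivAt.congr_deriv (f := G) hfinal ?_
    have hA : (ν x ^ 2) ^ ((2:ℝ)/3 - 1) = (ν x ^ 2) ^ ((2:ℝ)/3) / (ν x ^ 2) := by
      rw [Real.rpow_sub hu, Real.rpow_one]
    have hB : (ν x ^ 2) ^ ((5:ℝ)/3 - 1) = (ν x ^ 2) ^ ((2:ℝ)/3) := by
      norm_num
    rw [hA, hB]
    field_simp
    ring
  have key : ∀ r > 0, G r = G 0 := by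
    intro r hr
    have h01 : ∀ ε ∈ Ioc (0:ℝ) r, G r = G ε := by
      intro ε hε
      have hconst := constant_of_has_deriv_right_zero (f := G) (a := ε) (b := r)
        (hGc.mono (fun x hx => le_trans hε.1.le hx.1))
        (fun x hx => (hGd x (lt_of_lt_of_le hε.1 hx.1)).hasDerivWithinAt)
      exact hconst r ⟨hε.2, le_refl r⟩
    have hlim0 : Tendsto G (𝓝[>] (0:ℝ)) (𝓝 (G 0)) :=
      (hGc 0 (mem_Ici.mpr (le_refl 0))).mono Ioi_subset_Ici_self
    have hlimr : Tendsto G (𝓝[>] (0:ℝ)) (𝓝 (G r)) := by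
      refine Tendsto.congr' ?_ tendsto_const_nhds
      filter_upwards [Ioc_mem_nhdsGT hr] with ε hε
      exact h01 ε hε
    exact tendsto_nhds_unique hlimr hlim0
  intro r hr
  rcases eq_or_lt_of_le hr with h0 | h0
  · simp [← h0, ht0, hν0]
  · have hνr := (hpos r h0).2
    have hkey := key r h0
    have hG0 : G 0 = -(ν₀ ^ ((10:ℝ)/3)) := by
      have : (ν₀ ^ 2 : ℝ) ^ ((5:ℝ)/3) = ν₀ ^ ((10:ℝ)/3) := by
        rw [← Real.rpow_natCast ν₀ 2, ← Real.rpow_mul hν₀.le]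
        norm_num
      simp [hGdef, ht0, hν0, this]
    have e1 : (ν r ^ 2 : ℝ) ^ ((2:ℝ)/3) = ν r ^ ((4:ℝ)/3) := by
      rw [← Real.rpow_natCast (ν r) 2, ← Real.rpow_mul hνr.le]
      norm_num
    have e2 : (ν r ^ 2 : ℝ) ^ ((5:ℝ)/3) = ν r ^ ((10:ℝ)/3) := by
      rw [← Real.rpow_natCast (ν r) 2, ← Real.rpow_mul hνr.le]
      norm_num
    rw [hG0] at hkey
    simp only [hGdef, e1, e2] at hkey
    have hApos : (0:ℝ) < ν r ^ ((4:ℝ)/3) := Real.rpow_pos_of_pos hνr _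
    field_simp
    linarith [hkey]
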